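/- If the value function V : ℕ × ℕ → ℝ satisfies the Bellman recursion V(t,b) = max over a ∈ {0,…,b} of [Σ_{δ=0}^{a} m(δ)·(r_avg + V(t-1, b-δ)) + Σ_{δ=a+1}^{D} m(δ)·V(t-1,b)] with V(0,b) = 0 for all b, where m is a probability mass function on {0,…,D} and r_avg ≥ 0, then for every fixed t, V(t,·) is monotonically non-decreasing in b. -/

import Mathlib

open Finset

/-- If `V` satisfies the Bellman recursion of the budget-constrained bidding MDP
with market price pmf `m` on `{0,…,D}` and nonnegative average reward `r_avg`,
then `V t ·` is monotonically non-decreasing in the budget. -/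
theorem value_monotone_in_budget
    (D : ℕ) (m : ℕ → ℝ) (hm : ∀ δ, 0 ≤ m δ) (hm1 : ∑ δ ∈ range (D + 1), m δ = 1)
    (ravg : ℝ) (hr : 0 ≤ ravg)
    (V : ℕ → ℕ → ℝ)
    (hV0 : ∀ b, V 0 b = 0)
    (hVrec : ∀ t b, V (t + 1) b =
      (range (b + 1)).sup' nonempty_range_add_one (fun a =>
        (∑ δ ∈ range (a + 1), m δ * (ravg + V t (b - δ))) +
        (∑ δ ∈ Icc (a + 1) D, m δ * V t b))) :
    ∀ t, Monotone (fun b => V t b) := by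
  intro t
  induction t with
  | zero => intro b b' _; simp [hV0]
  | succ t ih =>
    intro b b' hbb'
    simp only
    rw [hVrec, hVrec]
    apply Finset.sup'_le
    intro a ha
    have ha' : a ∈ range (b' + 1) :=
      mem_range.mpr (lt_of_lt_of_le (mem_range.mp ha) (by omega))
    refine le_trans ?_ (Finset.le_sup' _ ha')
    gcongr with δ hδ δ hδ
    · exact hm δ
    · exact ih (Nat.sub_le_sub_right hbb' δ)
    · exact hm δ
    · exact ih hbb'
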